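/- arXiv:1112.2002 — 3 statements merged into one kernel-verified Lean document; each statement's English description precedes it below -/
import Mathlib

section
/- Truncations of minimizers are minimizers: Let Ω ⊆ ℝⁿ (n ≥ 1) be a bounded open set, let a : ℝⁿ → ℝ be nonnegative and integrable on Ω, and let u : ℝⁿ → ℝ be a Lipschitz function such that ∫_Ω a‖∇u‖ dx ≤ ∫_Ω a‖∇v‖ dx for every Lipschitz v : ℝⁿ → ℝ with v = u on the frontier ∂Ω. Fix λ ∈ ℝ and set u₊ := max(u − λ, 0) and u₋ := min(u, λ). Then: (i) ∫_Ω a‖∇u₊‖ dx ≤ ∫_Ω a‖∇v‖ dx for every Lipschitz v : ℝⁿ → ℝ with v = u₊ on ∂Ω; and (ii) ∫_Ω a‖∇u₋‖ dx ≤ ∫_Ω a‖∇v‖ dx for every Lipschitz v : ℝⁿ → ℝ with v = u₋ on ∂Ω. -/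
open MeasureTheory Filter Set Asymptotics
open scoped NNReal ENNReal Topology


open MeasureTheory
open scoped NNReal ENNReal


open MeasureTheory Filter Set Asymptotics
open scoped NNReal ENNReal Topology

section PointwiseLemmas

variable {E : Type*} [NormedAddCommGroup E] [NormedSpace ℝ E]

/-- If `u x = lam` and `u` has a nonzero derivative at `x`, then `max (u · - lam) 0`
is not differentiable at `x`. -/
lemma not_differentiableAt_maxsub {u : E → ℝ} {x : E} {lam : ℝ} {g : E →L[ℝ] ℝ}
    (hd : HasFDerivAt u g x) (hx : u x = lam) (hg : g ≠ 0) :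
    ¬ DifferentiableAt ℝ (fun y => max (u y - lam) 0) x := by
  intro hdiff
  set φ := fun y => max (u y - lam) 0 with hφdef
  have hL : HasFDerivAt φ (fderiv ℝ φ x) x := hdiff.hasFDerivAt
  set L := fderiv ℝ φ x with hLdef
  obtain ⟨h0, hh0⟩ : ∃ h, g h ≠ 0 := by
    by_contra hc
    push_neg at hc
    exact hg (ContinuousLinearMap.ext fun y => by simp [hc y])
  obtain ⟨h, hpos⟩ : ∃ h, 0 < g h := by
    rcases Ne.lt_or_gt hh0 with hlt | hgt
    · exact ⟨-h0, by simpa using hlt⟩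
    · exact ⟨h0, hgt⟩
  set line := fun t : ℝ => x + t • h with hlinedef
  have hline : HasDerivAt line h 0 := by
    have h1 : HasDerivAt (fun t : ℝ => t • h) ((1:ℝ) • h) 0 := (hasDerivAt_id 0).smul_const h
    simpa [hlinedef] using h1.const_add x
  have hline0 : line 0 = x := by simp [hlinedef]
  set ψ := fun t : ℝ => u (line t) - lam with hψdef
  have hψ : HasDerivAt ψ (g h) 0 := by
    have hd' : HasFDerivAt u g (line 0) := hline0 ▸ hd
    have := hd'.comp_hasDerivAt 0 hline
    simpa [hψdef, Function.comp] using this.sub_const lam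
  have hφd : HasDerivAt (fun t => max (ψ t) 0) (L h) 0 := by
    have hL' : HasFDerivAt φ L (line 0) := hline0 ▸ hL
    have := hL'.comp_hasDerivAt 0 hline
    simpa [hφdef, hψdef, Function.comp_def] using this
  have hψ0 : ψ 0 = 0 := by simp [hψdef, hline0, hx]
  have hslope : Tendsto (slope ψ 0) (𝓝[≠] 0) (𝓝 (g h)) := hasDerivAt_iff_tendsto_slope.1 hψ
  -- right side
  have hmonoR : 𝓝[>] (0:ℝ) ≤ 𝓝[≠] 0 := nhdsWithin_mono 0 fun t ht => ne_of_gt ht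
  have hevR : ∀ᶠ t in 𝓝[>] (0:ℝ), 0 < ψ t := by
    filter_upwards [(hslope.mono_left hmonoR).eventually_const_lt hpos,
      self_mem_nhdsWithin] with t hst (ht : 0 < t)
    rw [slope_def_field, hψ0, sub_zero, sub_zero] at hst
    rcases div_pos_iff.1 hst with ⟨h1, _⟩ | ⟨_, h2⟩
    · exact h1
    · linarith
  have hR1 : HasDerivWithinAt (fun t => max (ψ t) 0) (g h) (Ioi 0) 0 := by
    refine hψ.hasDerivWithinAt.congr_of_eventuallyEq ?_ (by simp [hψ0])
    filter_upwards [hevR] with t ht using max_eq_left ht.le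
  have hR2 : HasDerivWithinAt (fun t => max (ψ t) 0) (L h) (Ioi 0) 0 := hφd.hasDerivWithinAt
  have heqR : g h = L h := by
    have := (uniqueDiffWithinAt_Ioi (0:ℝ)).eq hR1.hasFDerivWithinAt hR2.hasFDerivWithinAt
    have := congrArg (fun (T : ℝ →L[ℝ] ℝ) => T 1) this
    simpa using this
  -- left side
  have hmonoL : 𝓝[<] (0:ℝ) ≤ 𝓝[≠] 0 := nhdsWithin_mono 0 fun t ht => ne_of_lt ht
  have hevL : ∀ᶠ t in 𝓝[<] (0:ℝ), ψ t < 0 := by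
    filter_upwards [(hslope.mono_left hmonoL).eventually_const_lt hpos,
      self_mem_nhdsWithin] with t hst (ht : t < 0)
    rw [slope_def_field, hψ0, sub_zero, sub_zero] at hst
    rcases div_pos_iff.1 hst with ⟨_, h2⟩ | ⟨h1, _⟩
    · linarith
    · exact h1
  have hL1 : HasDerivWithinAt (fun t => max (ψ t) 0) (0:ℝ) (Iio 0) 0 := by
    refine (hasDerivWithinAt_const (0:ℝ) (Iio 0) (0:ℝ)).congr_of_eventuallyEq ?_ (by simp [hψ0])
    filter_upwards [hevL] with t ht using max_eq_right ht.le
  have hL2 : HasDerivWithinAt (fun t => max (ψ t) 0) (L h) (Iio 0) 0 := hφd.hasDerivWithinAt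
  have heqL : (0:ℝ) = L h := by
    have := (uniqueDiffWithinAt_Iio (0:ℝ)).eq hL1.hasFDerivWithinAt hL2.hasFDerivWithinAt
    have := congrArg (fun (T : ℝ →L[ℝ] ℝ) => T 1) this
    simpa using this
  rw [← heqL] at heqR
  exact absurd heqR hpos.ne'

/-- If `u x = lam` and `u` has derivative `0` at `x`, then `max (u · - lam) 0` has
derivative `0` at `x`. -/
lemma hasFDerivAt_maxsub_zero {u : E → ℝ} {x : E} {lam : ℝ}
    (hd : HasFDerivAt u (0 : E →L[ℝ] ℝ) x) (hx : u x = lam) :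
    HasFDerivAt (fun y => max (u y - lam) 0) (0 : E →L[ℝ] ℝ) x := by
  rw [hasFDerivAt_iff_isLittleO_nhds_zero] at hd ⊢
  simp only [ContinuousLinearMap.zero_apply, sub_zero] at hd ⊢
  have hbound : ∀ z : E, ‖max (u (x + z) - lam) 0 - max (u x - lam) 0‖ ≤
      1 * ‖u (x + z) - u x‖ := by
    intro z
    rw [one_mul, Real.norm_eq_abs, Real.norm_eq_abs]
    have := abs_max_sub_max_le_abs (u (x + z) - lam) (u x - lam) 0
    simpa using this
  exact (IsBigO.of_bound 1 (Eventually.of_forall hbound)).trans_isLittleO hd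

lemma fderiv_add_norm_le {v g : E → ℝ} {x : E} (hv : DifferentiableAt ℝ v x) :
    ‖fderiv ℝ (fun y => v y + g y) x‖ ≤ ‖fderiv ℝ v x‖ + ‖fderiv ℝ g x‖ := by
  by_cases hg : DifferentiableAt ℝ g x
  · rw [fderiv_fun_add hv hg]
    exact norm_add_le _ _
  · have hnd : ¬ DifferentiableAt ℝ (fun y => v y + g y) x := by
      intro hs
      exact hg (by simpa using hs.fun_sub hv)
    rw [fderiv_zero_of_not_differentiableAt hnd]
    simp
    positivity

/-- Pointwise decomposition: at every point where `u` is differentiable,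
`‖∇u₊‖ + ‖∇u₋‖ ≤ ‖∇u‖` (with the junk-value convention `fderiv = 0` at points of
non-differentiability). -/
lemma fderiv_trunc_norm_le {u : E → ℝ} {x : E} (lam : ℝ) (hc : Continuous u)
    (hd : DifferentiableAt ℝ u x) :
    ‖fderiv ℝ (fun y => max (u y - lam) 0) x‖ + ‖fderiv ℝ (fun y => min (u y) lam) x‖ ≤
      ‖fderiv ℝ u x‖ := by
  have hmineq : (fun y => min (u y) lam) = fun y => u y - max (u y - lam) 0 := by
    funext y
    rcases le_total (u y) lam with h | h
    · rw [min_eq_left h, max_eq_right (by linarith), sub_zero]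
    · rw [min_eq_right h, max_eq_left (by linarith)]; ring
  have hmaxeq : (fun y => max (u y - lam) 0) = fun y => u y - min (u y) lam := by
    funext y
    rcases le_total (u y) lam with h | h
    · rw [min_eq_left h, max_eq_right (by linarith), sub_self]
    · rw [min_eq_right h, max_eq_left (by linarith)]
  rcases lt_trichotomy (u x) lam with hlt | heq | hgt
  · -- u x < lam : u₊ = 0 locally, u₋ = u locally
    have hnb : {y | u y < lam} ∈ nhds x := (isOpen_lt hc continuous_const).mem_nhds hlt
    have h1 : fderiv ℝ (fun y => max (u y - lam) 0) x = 0 := by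
      have hev : (fun y => max (u y - lam) 0) =ᶠ[nhds x] fun _ => (0:ℝ) := by
        filter_upwards [hnb] with y (hy : u y < lam) using max_eq_right (by linarith)
      rw [hev.fderiv_eq]; simp
    have h2 : fderiv ℝ (fun y => min (u y) lam) x = fderiv ℝ u x := by
      have hev : (fun y => min (u y) lam) =ᶠ[nhds x] u := by
        filter_upwards [hnb] with y (hy : u y < lam) using min_eq_left hy.le
      rw [hev.fderiv_eq]
    rw [h1, h2]; simp
  · by_cases h0 : fderiv ℝ u x = 0
    · have hup : HasFDerivAt (fun y => max (u y - lam) 0) (0 : E →L[ℝ] ℝ) x :=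
        hasFDerivAt_maxsub_zero (h0 ▸ hd.hasFDerivAt) heq
      have h1 : fderiv ℝ (fun y => max (u y - lam) 0) x = 0 := hup.fderiv
      have h2 : fderiv ℝ (fun y => min (u y) lam) x = 0 := by
        have := (hd.hasFDerivAt.fun_sub hup).fderiv
        rw [← hmineq] at this
        rw [this, h0]; simp
      rw [h1, h2]; simp
    · have hndp : ¬ DifferentiableAt ℝ (fun y => max (u y - lam) 0) x :=
        not_differentiableAt_maxsub hd.hasFDerivAt heq h0
      have hndm : ¬ DifferentiableAt ℝ (fun y => min (u y) lam) x := by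
        intro hm
        exact hndp (by rw [hmaxeq]; exact hd.sub hm)
      rw [fderiv_zero_of_not_differentiableAt hndp, fderiv_zero_of_not_differentiableAt hndm]
      simp
  · -- u x > lam : u₊ = u - lam locally, u₋ = lam locally
    have hnb : {y | lam < u y} ∈ nhds x := (isOpen_lt continuous_const hc).mem_nhds hgt
    have h1 : fderiv ℝ (fun y => max (u y - lam) 0) x = fderiv ℝ u x := by
      have hev : (fun y => max (u y - lam) 0) =ᶠ[nhds x] fun y => u y - lam := by
        filter_upwards [hnb] with y (hy : lam < u y) using max_eq_left (by linarith)
      rw [hev.fderiv_eq, fderiv_sub_const]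
    have h2 : fderiv ℝ (fun y => min (u y) lam) x = 0 := by
      have hev : (fun y => min (u y) lam) =ᶠ[nhds x] fun _ => lam := by
        filter_upwards [hnb] with y (hy : lam < u y) using min_eq_right hy.le
      rw [hev.fderiv_eq]; simp
    rw [h1, h2]; simp

end PointwiseLemmas

section Main

variable {n : ℕ}

local notation "E" => EuclideanSpace ℝ (Fin n)

lemma norm_gradient_eq (f : E → ℝ) (x : E) : ‖gradient f x‖ = ‖fderiv ℝ f x‖ :=
  (InnerProductSpace.toDual ℝ (EuclideanSpace ℝ (Fin n))).symm.norm_map _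

lemma integrableOn_weighted_grad {Ω : Set E} {a : E → ℝ} (ha0 : ∀ x, 0 ≤ a x)
    (hai : IntegrableOn a Ω) (f : E → ℝ) (C : ℝ≥0) (hf : LipschitzWith C f) :
    IntegrableOn (fun x => a x * ‖gradient f x‖) Ω := by
  have hm : Measurable fun x => ‖gradient f x‖ :=
    (((InnerProductSpace.toDual ℝ (EuclideanSpace ℝ (Fin n))).symm.continuous.measurable).comp
      (measurable_fderiv ℝ f)).norm
  refine Integrable.mono' (hai.const_mul (C:ℝ)) (hai.aestronglyMeasurable.mul
    hm.aestronglyMeasurable) ?_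
  filter_upwards with x
  rw [Real.norm_eq_abs, abs_of_nonneg (mul_nonneg (ha0 x) (norm_nonneg _)), mul_comm ((C:ℝ)) _]
  refine mul_le_mul_of_nonneg_left ?_ (ha0 x)
  rw [norm_gradient_eq]
  exact norm_fderiv_le_of_lipschitz ℝ hf

/-- Key lemma: if `u` minimizes and `u = p + q` with `p`, `q` Lipschitz satisfying the
pointwise gradient decomposition inequality, then `p` minimizes for its own boundary data. -/
lemma key_lemma (Ω : Set E) (a : E → ℝ) (ha0 : ∀ x, 0 ≤ a x) (hai : IntegrableOn a Ω)
    (u : E → ℝ) (K : ℝ≥0) (hu : LipschitzWith K u)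
    (hmin : ∀ v : E → ℝ, (∃ K', LipschitzWith K' v) →
      (∀ x ∈ frontier Ω, v x = u x) →
      (∫ x in Ω, a x * ‖gradient u x‖) ≤ ∫ x in Ω, a x * ‖gradient v x‖)
    (p q : E → ℝ) (Kp Kq : ℝ≥0) (hp : LipschitzWith Kp p) (hq : LipschitzWith Kq q)
    (hpq : ∀ y, p y + q y = u y)
    (hA : ∀ x, DifferentiableAt ℝ u x →
      ‖fderiv ℝ p x‖ + ‖fderiv ℝ q x‖ ≤ ‖fderiv ℝ u x‖) :
    ∀ v : E → ℝ, (∃ K', LipschitzWith K' v) → (∀ x ∈ frontier Ω, v x = p x) →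
      (∫ x in Ω, a x * ‖gradient p x‖) ≤ ∫ x in Ω, a x * ‖gradient v x‖ := by
  intro v hvl hbd
  obtain ⟨K', hv⟩ := hvl
  set w := fun y => v y + q y with hwdef
  have hw : LipschitzWith (K' + Kq) w := hv.add hq
  have hbdw : ∀ x ∈ frontier Ω, w x = u x := by
    intro x hx
    rw [hwdef]
    simp only
    rw [hbd x hx, hpq x]
  have hIp := integrableOn_weighted_grad ha0 hai p Kp hp
  have hIq := integrableOn_weighted_grad ha0 hai q Kq hq
  have hIu := integrableOn_weighted_grad ha0 hai u K hu
  have hIv := integrableOn_weighted_grad ha0 hai v K' hv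
  have haeu : ∀ᵐ x ∂(volume.restrict Ω), DifferentiableAt ℝ u x :=
    ae_restrict_of_ae (hu.ae_differentiableAt (μ := volume))
  have haev : ∀ᵐ x ∂(volume.restrict Ω), DifferentiableAt ℝ v x :=
    ae_restrict_of_ae (hv.ae_differentiableAt (μ := volume))
  have h3 : (∫ x in Ω, a x * ‖gradient p x‖) + (∫ x in Ω, a x * ‖gradient q x‖) ≤
      ∫ x in Ω, a x * ‖gradient u x‖ := by
    rw [← integral_add hIp hIq]
    refine integral_mono_of_nonneg ?_ hIu ?_
    · filter_upwards with x
      have := ha0 x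
      positivity
    · filter_upwards [haeu] with x hx
      rw [norm_gradient_eq, norm_gradient_eq, norm_gradient_eq, ← mul_add]
      exact mul_le_mul_of_nonneg_left (hA x hx) (ha0 x)
  have h1 : (∫ x in Ω, a x * ‖gradient u x‖) ≤ ∫ x in Ω, a x * ‖gradient w x‖ :=
    hmin w ⟨K' + Kq, hw⟩ hbdw
  have h2 : (∫ x in Ω, a x * ‖gradient w x‖) ≤
      (∫ x in Ω, a x * ‖gradient v x‖) + ∫ x in Ω, a x * ‖gradient q x‖ := by
    rw [← integral_add hIv hIq]
    refine integral_mono_of_nonneg ?_ (hIv.add hIq) ?_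
    · filter_upwards with x
      have := ha0 x
      positivity
    · filter_upwards [haev] with x hx
      rw [norm_gradient_eq, norm_gradient_eq, norm_gradient_eq, ← mul_add]
      exact mul_le_mul_of_nonneg_left (fderiv_add_norm_le hx) (ha0 x)
  linarith

end Main


/-- Truncations of minimizers of the weighted least gradient functional are
minimizers with respect to their own boundary values: if `u` minimizes
`∫_Ω a‖∇·‖` among Lipschitz functions with its boundary values on `∂Ω`, then so do
`u₊ = max (u - λ) 0` and `u₋ = min u λ`. -/
theorem truncations_of_minimizers_are_minimizers
    (n : ℕ) (hn : 1 ≤ n)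
    (Ω : Set (EuclideanSpace ℝ (Fin n))) (hΩo : IsOpen Ω)
    (hΩb : Bornology.IsBounded Ω)
    (a : EuclideanSpace ℝ (Fin n) → ℝ) (ha0 : ∀ x, 0 ≤ a x)
    (hai : IntegrableOn a Ω)
    (u : EuclideanSpace ℝ (Fin n) → ℝ) (K : ℝ≥0) (hu : LipschitzWith K u)
    (hmin : ∀ v : EuclideanSpace ℝ (Fin n) → ℝ, (∃ K', LipschitzWith K' v) →
      (∀ x ∈ frontier Ω, v x = u x) →
      (∫ x in Ω, a x * ‖gradient u x‖) ≤ ∫ x in Ω, a x * ‖gradient v x‖)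
    (lam : ℝ) :
    (∀ v : EuclideanSpace ℝ (Fin n) → ℝ, (∃ K', LipschitzWith K' v) →
      (∀ x ∈ frontier Ω, v x = max (u x - lam) 0) →
      (∫ x in Ω, a x * ‖gradient (fun y => max (u y - lam) 0) x‖) ≤
        ∫ x in Ω, a x * ‖gradient v x‖) ∧
    (∀ v : EuclideanSpace ℝ (Fin n) → ℝ, (∃ K', LipschitzWith K' v) →
      (∀ x ∈ frontier Ω, v x = min (u x) lam) →
      (∫ x in Ω, a x * ‖gradient (fun y => min (u y) lam) x‖) ≤
        ∫ x in Ω, a x * ‖gradient v x‖) := by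
  have hsub : LipschitzWith K (fun y => u y - lam) :=
    LipschitzWith.of_dist_le_mul fun x y => by
      rw [dist_sub_right]; exact hu.dist_le_mul x y
  have hup : LipschitzWith K (fun y => max (u y - lam) 0) := hsub.max_const 0
  have hum : LipschitzWith K (fun y => min (u y) lam) := hu.min_const lam
  have hpq : ∀ y, max (u y - lam) 0 + min (u y) lam = u y := by
    intro y
    rcases le_total (u y) lam with h | h
    · rw [max_eq_right (by linarith), min_eq_left h, zero_add]
    · rw [max_eq_left (by linarith), min_eq_right h]; ring
  have hA := fun x hx => fderiv_trunc_norm_le (u := u) (x := x) lam hu.continuous hx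
  constructor
  · exact key_lemma Ω a ha0 hai u K hu hmin _ _ K K hup hum hpq hA
  · refine key_lemma Ω a ha0 hai u K hu hmin _ _ K K hum hup
      (fun y => by rw [add_comm]; exact hpq y) (fun x hx => by rw [add_comm]; exact hA x hx)
end

section
/- Double truncations of minimizers are minimizers: Let Ω ⊆ ℝⁿ (n ≥ 1) be a bounded open set, let a : ℝⁿ → ℝ be nonnegative and integrable on Ω, and let u : ℝⁿ → ℝ be a Lipschitz function such that ∫_Ω a‖∇u‖ dx ≤ ∫_Ω a‖∇v‖ dx for every Lipschitz v : ℝⁿ → ℝ with v = u on the frontier ∂Ω. For λ ∈ ℝ and ε > 0, define u_{λ,ε} := (1/ε) · min(ε, max(u − λ, 0)). Then u_{λ,ε} is Lipschitz and ∫_Ω a‖∇u_{λ,ε}‖ dx ≤ ∫_Ω a‖∇v‖ dx for every Lipschitz v : ℝⁿ → ℝ with v = u_{λ,ε} on ∂Ω. -/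
open MeasureTheory Filter
open scoped NNReal ENNReal Topology

section AuxLemmas

variable {V : Type*} [NormedAddCommGroup V] [NormedSpace ℝ V]

private lemma slope_tendsto_aux {f : V → ℝ} {L : V →L[ℝ] ℝ} {x : V} (hf : HasFDerivAt f L x)
    (h : V) :
    Tendsto (fun t : ℝ => (f (x + t • h) - f x) / t) (𝓝[≠] 0) (𝓝 (L h)) := by
  have h1 : HasDerivAt (fun t : ℝ => x + t • h) h 0 := by
    simpa using ((hasDerivAt_id (0:ℝ)).smul_const h).const_add x
  have h2 : HasDerivAt (fun t : ℝ => f (x + t • h)) (L h) 0 := by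
    have : HasFDerivAt f L (x + (0:ℝ) • h) := by simpa using hf
    exact this.comp_hasDerivAt 0 h1
  have h3 := hasDerivAt_iff_tendsto_slope.mp h2
  have h4 : (slope (fun t : ℝ => f (x + t • h)) 0) = fun t : ℝ => (f (x + t • h) - f x) / t := by
    funext t
    simp [slope_def_field]
  rwa [h4] at h3

private lemma clm_proportional {M L : V →L[ℝ] ℝ} {C : ℝ} (hC : 0 ≤ C)
    (h1 : ∀ h, |M h| ≤ C * |L h|) (h2 : ∀ h, 0 ≤ M h * L h) :
    ∃ c, 0 ≤ c ∧ c ≤ C ∧ M = c • L := by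
  by_cases hL : ∀ h, L h = 0
  · refine ⟨0, le_rfl, hC, ?_⟩
    ext h
    have := h1 h
    rw [hL h] at this
    simp only [abs_zero, mul_zero] at this
    have hM : M h = 0 := abs_eq_zero.mp (le_antisymm this (abs_nonneg _))
    simp [hM, hL h]
  · push_neg at hL
    obtain ⟨h₀, hh₀⟩ := hL
    refine ⟨M h₀ / L h₀, ?_, ?_, ?_⟩
    · have : M h₀ / L h₀ = (M h₀ * L h₀) / (L h₀ * L h₀) := by
        field_simp
      rw [this]
      exact div_nonneg (h2 h₀) (mul_self_nonneg _)
    · have habs : |M h₀ / L h₀| ≤ C := by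
        rw [abs_div, div_le_iff₀ (abs_pos.mpr hh₀)]
        exact h1 h₀
      exact (le_abs_self _).trans habs
    · ext h
      have hk : L (h - (L h / L h₀) • h₀) = 0 := by
        simp only [map_sub, ContinuousLinearMap.map_smul, smul_eq_mul]
        field_simp
        simp
      have hMk : M (h - (L h / L h₀) • h₀) = 0 := by
        have := h1 (h - (L h / L h₀) • h₀)
        rw [hk] at this
        simp only [abs_zero, mul_zero] at this
        exact abs_eq_zero.mp (le_antisymm this (abs_nonneg _))
      rw [map_sub, ContinuousLinearMap.map_smul, smul_eq_mul, sub_eq_zero] at hMk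
      simp only [ContinuousLinearMap.smul_apply, smul_eq_mul]
      rw [hMk]
      field_simp

/-- If `w` and `u` are both differentiable at `x`, `w` is a `C`-Lipschitz monotone function
of `u` (in the sense of the two global inequalities), then `fderiv w = c • fderiv u` for some
`c ∈ [0, C]`. -/
private lemma fderiv_comp_proportional {u w : V → ℝ} {x : V} {C : ℝ} (hC : 0 ≤ C)
    (hu : DifferentiableAt ℝ u x) (hw : DifferentiableAt ℝ w x)
    (hlip : ∀ y z, |w y - w z| ≤ C * |u y - u z|)
    (hmono : ∀ y z, 0 ≤ (w y - w z) * (u y - u z)) :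
    ∃ c, 0 ≤ c ∧ c ≤ C ∧ fderiv ℝ w x = c • fderiv ℝ u x := by
  apply clm_proportional hC
  · intro h
    have Tw := slope_tendsto_aux hw.hasFDerivAt h
    have Tu := slope_tendsto_aux hu.hasFDerivAt h
    refine le_of_tendsto_of_tendsto Tw.abs (Tu.abs.const_mul C) ?_
    filter_upwards [self_mem_nhdsWithin] with t ht
    have ht' : (0:ℝ) < |t| := abs_pos.mpr ht
    show |(w (x + t • h) - w x) / t| ≤ C * |(u (x + t • h) - u x) / t|
    rw [abs_div, abs_div, ← mul_div_assoc]
    exact div_le_div_of_nonneg_right (hlip _ _) (abs_nonneg t)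
  · intro h
    have Tw := slope_tendsto_aux hw.hasFDerivAt h
    have Tu := slope_tendsto_aux hu.hasFDerivAt h
    refine ge_of_tendsto (Tw.mul Tu) ?_
    filter_upwards with t
    have : (w (x + t • h) - w x) / t * ((u (x + t • h) - u x) / t)
        = (w (x + t • h) - w x) * (u (x + t • h) - u x) / (t * t) := by
      rw [div_mul_div_comm]
    rw [this]
    exact div_nonneg (hmono _ _) (mul_self_nonneg t)

end AuxLemmas

/-- Double truncations of minimizers of the weighted least gradient functional are
minimizers with respect to their own boundary values. -/
theorem double_truncations_of_minimizers_are_minimizers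
    (n : ℕ) (hn : 1 ≤ n)
    (Ω : Set (EuclideanSpace ℝ (Fin n))) (hΩo : IsOpen Ω)
    (hΩb : Bornology.IsBounded Ω)
    (a : EuclideanSpace ℝ (Fin n) → ℝ) (ha0 : ∀ x, 0 ≤ a x)
    (hai : IntegrableOn a Ω)
    (u : EuclideanSpace ℝ (Fin n) → ℝ) (K : ℝ≥0) (hu : LipschitzWith K u)
    (hmin : ∀ v : EuclideanSpace ℝ (Fin n) → ℝ, (∃ K', LipschitzWith K' v) →
      (∀ x ∈ frontier Ω, v x = u x) →
      (∫ x in Ω, a x * ‖gradient u x‖) ≤ ∫ x in Ω, a x * ‖gradient v x‖)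
    (lam ε : ℝ) (hε : 0 < ε) :
    (∃ K', LipschitzWith K' (fun y => (1 / ε) * min ε (max (u y - lam) 0))) ∧
    (∀ v : EuclideanSpace ℝ (Fin n) → ℝ, (∃ K', LipschitzWith K' v) →
      (∀ x ∈ frontier Ω, v x = (1 / ε) * min ε (max (u x - lam) 0)) →
      (∫ x in Ω, a x * ‖gradient (fun y => (1 / ε) * min ε (max (u y - lam) 0)) x‖) ≤
        ∫ x in Ω, a x * ‖gradient v x‖) := by
  set w : EuclideanSpace ℝ (Fin n) → ℝ := fun y => (1 / ε) * min ε (max (u y - lam) 0) with hwdef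
  have hεinv : (0:ℝ) ≤ 1/ε := by positivity
  -- the scalar truncation is (1/ε)-Lipschitz and monotone
  have glip : ∀ s t : ℝ, |(1/ε) * min ε (max (s - lam) 0) - (1/ε) * min ε (max (t - lam) 0)|
      ≤ (1/ε) * |s - t| := by
    intro s t
    rw [← mul_sub, abs_mul, abs_of_nonneg hεinv]
    have h1 : |min ε (max (s - lam) 0) - min ε (max (t - lam) 0)|
        ≤ |max (s - lam) 0 - max (t - lam) 0| := by
      simpa using abs_min_sub_min_le_max ε (max (s - lam) 0) ε (max (t - lam) 0)
    have h2 : |max (s - lam) 0 - max (t - lam) 0| ≤ |(s - lam) - (t - lam)| :=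
      abs_max_sub_max_le_abs _ _ _
    have h3 : |(s - lam) - (t - lam)| = |s - t| := by ring_nf
    exact mul_le_mul_of_nonneg_left ((h1.trans h2).trans h3.le) hεinv
  have gmono : Monotone (fun t : ℝ => (1/ε) * min ε (max (t - lam) 0)) := by
    intro s t hst
    exact mul_le_mul_of_nonneg_left
      (min_le_min le_rfl (max_le_max (sub_le_sub_right hst lam) le_rfl)) hεinv
  -- Lipschitz constant for w
  set Kw : ℝ≥0 := ⟨1/ε, hεinv⟩ * K with hKwdef
  have hwlip : LipschitzWith Kw w := by
    apply LipschitzWith.of_dist_le_mul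
    intro y z
    rw [Real.dist_eq]
    calc |w y - w z| ≤ (1/ε) * |u y - u z| := glip _ _
      _ = (1/ε) * dist (u y) (u z) := by rw [Real.dist_eq]
      _ ≤ (1/ε) * (K * dist y z) := by
          exact mul_le_mul_of_nonneg_left (hu.dist_le_mul y z) hεinv
      _ = (Kw : ℝ) * dist y z := by
          have : (Kw : ℝ) = (1/ε) * (K : ℝ) := rfl
          rw [this, mul_assoc]
  refine ⟨⟨Kw, hwlip⟩, ?_⟩
  intro v hvK hvb
  obtain ⟨Kv, hvlip⟩ := hvK
  -- global comparison inequalities between u and w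
  have hwu_lip : ∀ y z : EuclideanSpace ℝ (Fin n), |w y - w z| ≤ (1/ε) * |u y - u z| := fun y z => glip (u y) (u z)
  have hwu_mono : ∀ y z : EuclideanSpace ℝ (Fin n), 0 ≤ (w y - w z) * (u y - u z) := by
    intro y z
    rcases le_total (u y) (u z) with h | h
    · have := gmono h
      have hw' : w y - w z ≤ 0 := sub_nonpos.mpr this
      have hu' : u y - u z ≤ 0 := sub_nonpos.mpr h
      nlinarith
    · have := gmono h
      exact mul_nonneg (sub_nonneg.mpr this) (sub_nonneg.mpr h)
  -- the comparison function φ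
  set φ : EuclideanSpace ℝ (Fin n) → ℝ := fun y => u y + ε * (v y - w y) with hφdef
  have hφlip : ∃ K', LipschitzWith K' φ := by
    refine ⟨K + ε.toNNReal * (Kv + Kw), LipschitzWith.of_dist_le_mul fun y z => ?_⟩
    have h1 : |u y - u z| ≤ (K:ℝ) * dist y z := by
      rw [← Real.dist_eq]; exact hu.dist_le_mul y z
    have h2 : |v y - v z| ≤ (Kv:ℝ) * dist y z := by
      rw [← Real.dist_eq]; exact hvlip.dist_le_mul y z
    have h3 : |w y - w z| ≤ (Kw:ℝ) * dist y z := by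
      rw [← Real.dist_eq]; exact hwlip.dist_le_mul y z
    have hc : ((K + ε.toNNReal * (Kv + Kw) : ℝ≥0) : ℝ) = (K:ℝ) + ε * ((Kv:ℝ) + (Kw:ℝ)) := by
      push_cast
      rw [Real.coe_toNNReal ε hε.le]
    rw [Real.dist_eq, hc]
    have key : |φ y - φ z| ≤ |u y - u z| + ε * (|v y - v z| + |w y - w z|) := by
      have : φ y - φ z = (u y - u z) + ε * ((v y - v z) - (w y - w z)) := by
        simp only [hφdef]; ring
      rw [this]
      calc |(u y - u z) + ε * ((v y - v z) - (w y - w z))|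
          ≤ |u y - u z| + |ε * ((v y - v z) - (w y - w z))| := abs_add_le _ _
        _ ≤ |u y - u z| + ε * (|v y - v z| + |w y - w z|) := by
            rw [abs_mul, abs_of_pos hε]
            exact add_le_add_right (mul_le_mul_of_nonneg_left (abs_sub _ _) hε.le) _
    refine key.trans ?_
    have hd : (0:ℝ) ≤ dist y z := dist_nonneg
    nlinarith [mul_le_mul_of_nonneg_left h2 hε.le, mul_le_mul_of_nonneg_left h3 hε.le]
  have hφb : ∀ x ∈ frontier Ω, φ x = u x := by
    intro x hx
    have hv' := hvb x hx
    simp only [hφdef]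
    rw [hv']
    ring
  -- norms of gradients are norms of Fréchet derivatives
  have hng : ∀ (f : EuclideanSpace ℝ (Fin n) → ℝ) (x : EuclideanSpace ℝ (Fin n)),
      ‖gradient f x‖ = ‖fderiv ℝ f x‖ := by
    intro f x
    exact LinearIsometryEquiv.norm_map _ _
  -- pointwise bound on the norm of any fderiv of a Lipschitz function
  have hnb : ∀ (f : EuclideanSpace ℝ (Fin n) → ℝ) (Kf : ℝ≥0), LipschitzWith Kf f → ∀ x : EuclideanSpace ℝ (Fin n),
      ‖fderiv ℝ f x‖ ≤ (Kf : ℝ) := fun f Kf hf x => norm_fderiv_le_of_lipschitz ℝ hf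
  -- integrability of the weighted gradient norms
  have hint : ∀ (f : EuclideanSpace ℝ (Fin n) → ℝ) (Kf : ℝ≥0), LipschitzWith Kf f →
      Integrable (fun x => a x * ‖gradient f x‖) (volume.restrict Ω) := by
    intro f Kf hf
    have hmeas : AEStronglyMeasurable (fun x => a x * ‖gradient f x‖) (volume.restrict Ω) := by
      apply hai.aestronglyMeasurable.mul
      apply Measurable.aestronglyMeasurable
      have hm : Measurable (fun x => ‖fderiv ℝ f x‖) := (measurable_fderiv ℝ f).norm
      have he : (fun x => ‖gradient f x‖) = fun x => ‖fderiv ℝ f x‖ := funext (hng f)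
      rw [he]
      exact hm
    refine Integrable.mono' (hai.const_mul (Kf:ℝ)) hmeas ?_
    filter_upwards with x
    rw [Real.norm_eq_abs, abs_of_nonneg (mul_nonneg (ha0 x) (norm_nonneg _))]
    rw [hng]
    calc a x * ‖fderiv ℝ f x‖ ≤ a x * (Kf:ℝ) :=
          mul_le_mul_of_nonneg_left (hnb f Kf hf x) (ha0 x)
      _ = (Kf:ℝ) * a x := mul_comm _ _
  obtain ⟨Kφ, hφlip'⟩ := hφlip
  have Iu : Integrable (fun x => a x * ‖gradient u x‖) (volume.restrict Ω) := hint u K hu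
  have Iw : Integrable (fun x => a x * ‖gradient w x‖) (volume.restrict Ω) := hint w Kw hwlip
  have Iv : Integrable (fun x => a x * ‖gradient v x‖) (volume.restrict Ω) := hint v Kv hvlip
  have Iφ : Integrable (fun x => a x * ‖gradient φ x‖) (volume.restrict Ω) := hint φ Kφ hφlip'
  -- the key pointwise a.e. inequality
  have hae : ∀ᵐ x : EuclideanSpace ℝ (Fin n) ∂volume,
      ‖gradient φ x‖ + ε * ‖gradient w x‖ ≤ ‖gradient u x‖ + ε * ‖gradient v x‖ := by
    filter_upwards [hu.ae_differentiableAt (μ := volume),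
      hwlip.ae_differentiableAt (μ := volume), hvlip.ae_differentiableAt (μ := volume)]
      with x hxu hxw hxv
    obtain ⟨c, hc0, hc1, hceq⟩ := fderiv_comp_proportional hεinv hxu hxw hwu_lip hwu_mono
    have hεc : ε * c ≤ 1 := by
      calc ε * c ≤ ε * (1/ε) := mul_le_mul_of_nonneg_left hc1 hε.le
        _ = 1 := by field_simp
    have hdsub : DifferentiableAt ℝ (fun y => v y - w y) x := hxv.sub hxw
    have hφfd : fderiv ℝ φ x = fderiv ℝ u x + ε • (fderiv ℝ v x - fderiv ℝ w x) := by
      have e1 : fderiv ℝ φ x = fderiv ℝ u x + fderiv ℝ (fun y => ε * (v y - w y)) x := by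
        exact fderiv_add hxu (hdsub.const_mul ε)
      have e2 : fderiv ℝ (fun y => ε * (v y - w y)) x = ε • fderiv ℝ (fun y => v y - w y) x :=
        fderiv_const_mul hdsub ε
      have e3 : fderiv ℝ (fun y => v y - w y) x = fderiv ℝ v x - fderiv ℝ w x :=
        fderiv_sub hxv hxw
      rw [e1, e2, e3]
    rw [hng, hng, hng, hng]
    set Lu := fderiv ℝ u x
    set Lv := fderiv ℝ v x
    set Lw := fderiv ℝ w x
    have h1 : fderiv ℝ φ x = (1 - ε * c) • Lu + ε • Lv := by
      rw [hφfd, hceq]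
      module
    have h2 : ‖fderiv ℝ φ x‖ ≤ (1 - ε * c) * ‖Lu‖ + ε * ‖Lv‖ := by
      rw [h1]
      calc ‖(1 - ε * c) • Lu + ε • Lv‖ ≤ ‖(1 - ε * c) • Lu‖ + ‖ε • Lv‖ := norm_add_le _ _
        _ = (1 - ε * c) * ‖Lu‖ + ε * ‖Lv‖ := by
            rw [norm_smul, norm_smul, Real.norm_eq_abs, Real.norm_eq_abs,
              abs_of_nonneg (by linarith), abs_of_pos hε]
    have h3 : ‖Lw‖ = c * ‖Lu‖ := by
      rw [hceq, norm_smul, Real.norm_eq_abs, abs_of_nonneg hc0]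
    calc ‖fderiv ℝ φ x‖ + ε * ‖Lw‖
        ≤ ((1 - ε * c) * ‖Lu‖ + ε * ‖Lv‖) + ε * (c * ‖Lu‖) := by
          rw [h3]
          exact add_le_add_left h2 _
      _ = ‖Lu‖ + ε * ‖Lv‖ := by ring
  -- integrate the pointwise inequality
  have haeΩ : ∀ᵐ x ∂(volume.restrict Ω),
      a x * ‖gradient φ x‖ + ε * (a x * ‖gradient w x‖)
        ≤ a x * ‖gradient u x‖ + ε * (a x * ‖gradient v x‖) := by
    refine ae_restrict_of_ae ?_
    filter_upwards [hae] with x hx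
    nlinarith [mul_le_mul_of_nonneg_left hx (ha0 x), ha0 x]
  have hsum : (∫ x in Ω, (a x * ‖gradient φ x‖ + ε * (a x * ‖gradient w x‖)))
      ≤ ∫ x in Ω, (a x * ‖gradient u x‖ + ε * (a x * ‖gradient v x‖)) :=
    integral_mono_ae (Iφ.add (Iw.const_mul ε)) (Iu.add (Iv.const_mul ε)) haeΩ
  rw [integral_add Iφ (Iw.const_mul ε), integral_add Iu (Iv.const_mul ε),
    integral_const_mul, integral_const_mul] at hsum
  have hmin' : (∫ x in Ω, a x * ‖gradient u x‖) ≤ ∫ x in Ω, a x * ‖gradient φ x‖ :=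
    hmin φ ⟨Kφ, hφlip'⟩ hφb
  have : ε * (∫ x in Ω, a x * ‖gradient w x‖) ≤ ε * ∫ x in Ω, a x * ‖gradient v x‖ := by
    linarith
  exact le_of_mul_le_mul_left (by linarith) hε
end

section
/- Topological separation lemma used in the uniqueness proof: Let n ≥ 1 and let Ω ⊆ ℝⁿ be a nonempty bounded open set whose frontier ∂Ω is connected and satisfies ∂Ω ⊆ closure(ℝⁿ \ closure(Ω)), and such that ℝⁿ \ closure(Ω) is connected. Let Σ ⊆ Ω be a compact set such that ℝⁿ \ Σ has exactly two connected components and such that Ω \ Σ has exactly two connected components O₁ and O₂. Then the frontier of O₁ is contained in Σ, or the frontier of O₂ is contained in Σ. -/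
/-- If `O` lies in the component `B` not meeting the exterior of `Ω`,
then `frontier O ⊆ S`. -/
private lemma tsl_aux {X : Type*} [TopologicalSpace X]
    (Ω S A B O O' : Set X) (hΩo : IsOpen Ω)
    (hAo : IsOpen A) (hBo : IsOpen B)
    (hABdisj : Disjoint A B) (hABuniv : A ∪ B = Sᶜ)
    (hE : (closure Ω)ᶜ ⊆ A)
    (hfrSub : frontier Ω ⊆ closure ((closure Ω)ᶜ))
    (hOo : IsOpen O) (hO'o : IsOpen O')
    (hOO' : Disjoint O O') (hOu : O ∪ O' = Ω \ S)
    (hOB : O ⊆ B) : frontier O ⊆ S := by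
  intro x hx
  by_contra hxS
  have hxAB : x ∈ A ∪ B := by rw [hABuniv]; exact hxS
  have hxclO : x ∈ closure O := hx.1
  have hxclB : x ∈ closure B := closure_mono hOB hxclO
  have hxnO : x ∉ O := fun h => hx.2 (by rw [hOo.interior_eq]; exact h)
  have hxB : x ∈ B := by
    rcases hxAB with hxA | hxB
    · exact absurd hxclB (Set.disjoint_left.mp (hABdisj.closure_right hAo) hxA)
    · exact hxB
  have hOΩ : O ⊆ Ω := hOu ▸ Set.subset_union_left |>.trans (Set.diff_subset)
  have hxclΩ : x ∈ closure Ω := closure_mono hOΩ hxclO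
  by_cases hxΩ : x ∈ Ω
  · -- x ∈ Ω \ S, so x ∈ O', contradiction with x ∈ closure O
    have : x ∈ O ∪ O' := hOu ▸ ⟨hxΩ, hxS⟩
    rcases this with h | h
    · exact hxnO h
    · exact Set.disjoint_left.mp ((hOO'.symm.closure_right hO'o)) h hxclO
  · -- x ∈ frontier Ω ⊆ closure (exterior) ⊆ closure A, contradicting x ∈ B
    have hxfr : x ∈ frontier Ω := by
      rw [hΩo.frontier_eq]; exact ⟨hxclΩ, hxΩ⟩
    have hxclA : x ∈ closure A := closure_mono hE (hfrSub hxfr)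
    exact Set.disjoint_left.mp (hABdisj.symm.closure_right hBo) hxB hxclA

/-- The half of the main argument where the exterior lies in `A`. -/
private lemma tsl_half {X : Type*} [TopologicalSpace X]
    (Ω S A B O₁ O₂ : Set X) (hΩo : IsOpen Ω) (hSΩ : S ⊆ Ω)
    (hAo : IsOpen A) (hBo : IsOpen B) (hB : B.Nonempty)
    (hABdisj : Disjoint A B) (hABuniv : A ∪ B = Sᶜ)
    (hE : (closure Ω)ᶜ ⊆ A)
    (hfrSub : frontier Ω ⊆ closure ((closure Ω)ᶜ))
    (hO₁o : IsOpen O₁) (hO₂o : IsOpen O₂)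
    (hO₁ : IsPreconnected O₁) (hO₂ : IsPreconnected O₂)
    (hOdisj : Disjoint O₁ O₂) (hOu : O₁ ∪ O₂ = Ω \ S) :
    frontier O₁ ⊆ S ∨ frontier O₂ ⊆ S := by
  have hsubc : ∀ O : Set X, O ⊆ Ω \ S → O ⊆ A ∪ B := fun O h => by
    rw [hABuniv]; exact fun x hx => (h hx).2
  have h1 : O₁ ⊆ A ∨ O₁ ⊆ B :=
    hO₁.subset_or_subset hAo hBo hABdisj (hsubc O₁ (hOu ▸ Set.subset_union_left))
  have h2 : O₂ ⊆ A ∨ O₂ ⊆ B :=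
    hO₂.subset_or_subset hAo hBo hABdisj (hsubc O₂ (hOu ▸ Set.subset_union_right))
  rcases h1 with h1 | h1
  · rcases h2 with h2 | h2
    · -- both in A: then B is empty, contradiction
      exfalso
      obtain ⟨y, hy⟩ := hB
      have hynA : y ∉ A := Set.disjoint_right.mp hABdisj hy
      have hynS : y ∉ S := by
        have : y ∈ Sᶜ := hABuniv ▸ Set.mem_union_right A hy
        exact this
      by_cases hyΩ : y ∈ Ω
      · have : y ∈ O₁ ∪ O₂ := hOu ▸ ⟨hyΩ, hynS⟩
        rcases this with h | h
        · exact hynA (h1 h)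
        · exact hynA (h2 h)
      · by_cases hycl : y ∈ closure Ω
        · have hyfr : y ∈ frontier Ω := by
            rw [hΩo.frontier_eq]; exact ⟨hycl, hyΩ⟩
          have : y ∈ closure A := closure_mono hE (hfrSub hyfr)
          exact Set.disjoint_left.mp (hABdisj.symm.closure_right hBo) hy this
        · exact hynA (hE hycl)
    · exact Or.inr (tsl_aux Ω S A B O₂ O₁ hΩo hAo hBo hABdisj hABuniv hE hfrSub
        hO₂o hO₁o hOdisj.symm (by rw [Set.union_comm]; exact hOu) h2)
  · exact Or.inl (tsl_aux Ω S A B O₁ O₂ hΩo hAo hBo hABdisj hABuniv hE hfrSub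
      hO₁o hO₂o hOdisj hOu h1)

/-- Topological separation lemma used in the uniqueness proof: let `Ω ⊆ ℝⁿ` be a
nonempty bounded open set whose frontier is connected, satisfies
`∂Ω ⊆ closure(ℝⁿ \ closure Ω)`, and whose exterior `ℝⁿ \ closure Ω` is connected.
Let `S ⊆ Ω` be compact such that `ℝⁿ \ S` has exactly two connected components
(encoded as a partition into two disjoint open connected sets `A`, `B`) and such
that `Ω \ S` has exactly two connected components `O₁`, `O₂` (encoded similarly).
Then the frontier of `O₁` or the frontier of `O₂` is contained in `S`. -/
theorem topological_separation_lemma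
    (n : ℕ) (hn : 1 ≤ n)
    (Ω : Set (EuclideanSpace ℝ (Fin n))) (hne : Ω.Nonempty)
    (hΩo : IsOpen Ω) (hΩb : Bornology.IsBounded Ω)
    (hfrConn : IsConnected (frontier Ω))
    (hfrSub : frontier Ω ⊆ closure ((closure Ω)ᶜ))
    (hext : IsConnected ((closure Ω)ᶜ))
    (S : Set (EuclideanSpace ℝ (Fin n))) (hSΩ : S ⊆ Ω) (hSc : IsCompact S)
    (A B : Set (EuclideanSpace ℝ (Fin n)))
    (hAo : IsOpen A) (hBo : IsOpen B)
    (hA : IsConnected A) (hB : IsConnected B)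
    (hABdisj : Disjoint A B) (hABuniv : A ∪ B = Sᶜ)
    (O₁ O₂ : Set (EuclideanSpace ℝ (Fin n)))
    (hO₁o : IsOpen O₁) (hO₂o : IsOpen O₂)
    (hO₁ : IsConnected O₁) (hO₂ : IsConnected O₂)
    (hOdisj : Disjoint O₁ O₂) (hOu : O₁ ∪ O₂ = Ω \ S) :
    frontier O₁ ⊆ S ∨ frontier O₂ ⊆ S := by
  have hES : (closure Ω)ᶜ ⊆ Sᶜ :=
    Set.compl_subset_compl.mpr ((hSΩ.trans subset_closure))
  have hEAB : (closure Ω)ᶜ ⊆ A ∪ B := hABuniv ▸ hES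
  rcases hext.isPreconnected.subset_or_subset hAo hBo hABdisj hEAB with hE | hE
  · exact tsl_half Ω S A B O₁ O₂ hΩo hSΩ hAo hBo hB.nonempty hABdisj hABuniv hE hfrSub
      hO₁o hO₂o hO₁.isPreconnected hO₂.isPreconnected hOdisj hOu
  · exact tsl_half Ω S B A O₁ O₂ hΩo hSΩ hBo hAo hA.nonempty hABdisj.symm
      (by rw [Set.union_comm]; exact hABuniv) hE hfrSub
      hO₁o hO₂o hO₁.isPreconnected hO₂.isPreconnected hOdisj hOu
end
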